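/- Let k ≥ 2 and n > 2 be integers and p = k^n - k - (-1)^n. Then (k^n - k) divides p^n - 1 and (k^n - (-1)^n) divides p^n - 1; moreover gcd(k^n - k, k^n - (-1)^n) = k - (-1)^n, and hence r := (p^n - 1)(k - (-1)^n)/((k^n - k)(k^n - (-1)^n)) is an integer dividing p^n - 1. -/

import Mathlib

theorem stmt_17 (k n : ℕ) (hk : 2 ≤ k) (hn : 2 < n) :
    ((k : ℤ) ^ n - k) ∣ (((k : ℤ) ^ n - k - (-1) ^ n) ^ n - 1) ∧
      ((k : ℤ) ^ n - (-1) ^ n) ∣ (((k : ℤ) ^ n - k - (-1) ^ n) ^ n - 1) ∧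
      (Int.gcd ((k : ℤ) ^ n - k) ((k : ℤ) ^ n - (-1) ^ n) : ℤ) = (k : ℤ) - (-1) ^ n ∧
      ∃ r : ℤ,
        r * (((k : ℤ) ^ n - k) * ((k : ℤ) ^ n - (-1) ^ n))
            = (((k : ℤ) ^ n - k - (-1) ^ n) ^ n - 1) * ((k : ℤ) - (-1) ^ n) ∧
          r ∣ (((k : ℤ) ^ n - k - (-1) ^ n) ^ n - 1) := by
  set a : ℤ := (k : ℤ) ^ n - k with ha_def
  set e : ℤ := (-1 : ℤ) ^ n with he_def
  set b : ℤ := (k : ℤ) ^ n - e with hb_def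
  have hk2 : (2 : ℤ) ≤ (k : ℤ) := by exact_mod_cast hk
  have hkn : (k : ℤ) < (k : ℤ) ^ n := by
    calc (k : ℤ) = (k : ℤ) ^ 1 := (pow_one _).symm
    _ < (k : ℤ) ^ n := by
        apply pow_lt_pow_right₀ (by linarith) (by omega)
  have F1 : (-e) ^ n = 1 := by
    rcases Nat.even_or_odd n with h | h <;>
      simp [he_def, h.neg_one_pow, Odd.neg_one_pow]
  have F2 : e * e = 1 := by
    rcases Nat.even_or_odd n with h | h <;>
      simp [he_def, h.neg_one_pow, Odd.neg_one_pow]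
  have F3 : e ^ n = e := by
    rcases Nat.even_or_odd n with h | h <;>
      simp [he_def, h.neg_one_pow, Odd.neg_one_pow]
  have he1 : e ≤ 1 := by
    rcases Nat.even_or_odd n with h | h <;>
      simp [he_def, h.neg_one_pow, Odd.neg_one_pow]
  -- first divisibility
  have h1 : a ∣ (a - e) ^ n - 1 := by
    have h0 : a ≡ 0 [ZMOD a] := Int.modEq_zero_iff_dvd.mpr dvd_rfl
    have hp : (a - e) ^ n ≡ (0 - e) ^ n [ZMOD a] := (h0.sub_right e).pow n
    have : (0 - e) ^ n = 1 := by rw [zero_sub, F1]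
    rw [this] at hp
    exact hp.symm.dvd
  -- second divisibility
  have h2 : b ∣ (a - e) ^ n - 1 := by
    have hab : a - e = b - (k : ℤ) := by ring
    rw [hab]
    have h0 : b ≡ 0 [ZMOD b] := Int.modEq_zero_iff_dvd.mpr dvd_rfl
    have hp : (b - (k : ℤ)) ^ n ≡ (0 - (k : ℤ)) ^ n [ZMOD b] := (h0.sub_right _).pow n
    have hke : ((k : ℤ)) ^ n ≡ e [ZMOD b] := by
      have : b ∣ (k : ℤ) ^ n - e := dvd_rfl
      exact (Int.modEq_iff_dvd.mpr this).symm
    have hp2 : (0 - (k : ℤ)) ^ n = (-1) ^ n * (k : ℤ) ^ n := by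
      rw [zero_sub, neg_pow]
    have hp3 : (b - (k : ℤ)) ^ n ≡ e * e [ZMOD b] := by
      calc (b - (k : ℤ)) ^ n ≡ (0 - (k : ℤ)) ^ n [ZMOD b] := hp
      _ = e * (k : ℤ) ^ n := by rw [hp2, ← he_def]
      _ ≡ e * e [ZMOD b] := hke.mul_left e
    rw [F2] at hp3
    exact hp3.symm.dvd
  have ha : 0 < a := by simp only [ha_def]; linarith
  have hb : 0 < b := by simp only [hb_def]; linarith
  have hd : 0 < (k : ℤ) - e := by linarith
  -- d divides a and b
  have hda : ((k : ℤ) - e) ∣ a := by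
    have hke : (k : ℤ) ≡ e [ZMOD (k : ℤ) - e] :=
      (Int.modEq_iff_dvd.mpr dvd_rfl).symm
    have : (k : ℤ) ^ n ≡ e ^ n [ZMOD (k : ℤ) - e] := hke.pow n
    rw [F3] at this
    have h0 : a ≡ 0 [ZMOD (k : ℤ) - e] := by
      calc a = (k : ℤ) ^ n - (k : ℤ) := ha_def
      _ ≡ e - e [ZMOD (k : ℤ) - e] := this.sub hke
      _ = 0 := by ring
    exact Int.modEq_zero_iff_dvd.mp h0
  have hdb : ((k : ℤ) - e) ∣ b := by
    have : b = a + ((k : ℤ) - e) := by simp only [ha_def, hb_def]; ring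
    rw [this]
    exact dvd_add hda dvd_rfl
  -- gcd
  have hg : (Int.gcd a b : ℤ) = (k : ℤ) - e := by
    apply Int.dvd_antisymm (Int.natCast_nonneg _) (le_of_lt hd)
    · have : (Int.gcd a b : ℤ) ∣ b - a := dvd_sub (Int.gcd_dvd_right a b) (Int.gcd_dvd_left a b)
      have hba : b - a = (k : ℤ) - e := by simp only [ha_def, hb_def]; ring
      rwa [hba] at this
    · exact Int.dvd_coe_gcd hda hdb
  refine ⟨h1, h2, hg, ?_⟩
  -- lcm
  have hlcm : (Int.lcm a b : ℤ) ∣ (a - e) ^ n - 1 := Int.coe_lcm_dvd h1 h2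
  have hgl : (Int.gcd a b : ℤ) * (Int.lcm a b : ℤ) = a * b := by
    have := Int.gcd_mul_lcm a b
    have h' : ((Int.gcd a b * Int.lcm a b : ℕ) : ℤ) = ((a * b).natAbs : ℤ) := by
      rw [Int.natAbs_mul]
      exact_mod_cast congrArg (Nat.cast : ℕ → ℤ) this
    rw [Nat.cast_mul] at h'
    rw [h', Int.natAbs_of_nonneg (by positivity)]
  obtain ⟨r, hr⟩ := hlcm
  refine ⟨r, ?_, ⟨(Int.lcm a b : ℤ), by rw [hr, mul_comm]⟩⟩
  calc r * (a * b) = r * ((Int.gcd a b : ℤ) * (Int.lcm a b : ℤ)) := by rw [hgl]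
  _ = ((Int.lcm a b : ℤ) * r) * (Int.gcd a b : ℤ) := by ring
  _ = ((a - e) ^ n - 1) * ((k : ℤ) - e) := by rw [← hr, hg]
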